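/- If U, W are subspaces of V with U ⊄ W, then H_N(U|W) ≤ H_N(U | U ∩ W). -/

import Mathlib

open scoped BigOperators
set_option linter.unusedSectionVars false
set_option maxHeartbeats 1000000

open Classical in
/-- Base-2 Shannon entropy of the random variable `f` on the finite probability
space `(Ω, p)`. -/
noncomputable def mapEnt {Ω β : Type*} [Fintype Ω] [Fintype β]
    (p : Ω → ℝ) (f : Ω → β) : ℝ :=
  ∑ b : β, -((∑ ω ∈ Finset.univ.filter (fun ω => f ω = b), p ω) *
      Real.logb 2 (∑ ω ∈ Finset.univ.filter (fun ω => f ω = b), p ω))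

open Classical in
/-- Entropy of a subspace `U` of the space of `F`-valued random variables on `Ω`:
the joint entropy of the collection of all random variables in `U` (equivalently,
of any generating set). -/
noncomputable def subEnt {F Ω : Type*} [Field F] [Fintype F] [Fintype Ω]
    (p : Ω → ℝ) (U : Submodule F (Ω → F)) : ℝ :=
  mapEnt p (fun ω => (fun u : U => (u : Ω → F) ω))

/-- Normalized conditional entropy `H_N(U|W) = (H(W+U) - H(W)) / (dim(W+U) - dim W)`. -/
noncomputable def condNE {F Ω : Type*} [Field F] [Fintype F] [Fintype Ω]
    (p : Ω → ℝ) (U W : Submodule F (Ω → F)) : ℝ :=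
  (subEnt p (W ⊔ U) - subEnt p W) /
    ((Module.finrank F ↥(W ⊔ U) : ℝ) - (Module.finrank F ↥W : ℝ))

namespace EntAux

open Classical in
noncomputable def pmass {Ω β : Type*} [Fintype Ω] (p : Ω → ℝ) (f : Ω → β) (b : β) : ℝ :=
  ∑ ω ∈ Finset.univ.filter (fun ω => f ω = b), p ω

open Classical in
noncomputable def ent {Ω β : Type*} [Fintype Ω] [Fintype β] (p : Ω → ℝ) (f : Ω → β) : ℝ :=
  ∑ b : β, Real.negMulLog (pmass p f b)

variable {Ω β γ δ : Type*} [Fintype Ω] [Fintype β] [Fintype γ] [Fintype δ]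
  {p : Ω → ℝ}

lemma pmass_nonneg (hp : ∀ ω, 0 ≤ p ω) (f : Ω → β) (b : β) : 0 ≤ pmass p f b :=
  Finset.sum_nonneg fun ω _ => hp ω

lemma sum_pmass (p : Ω → ℝ) (f : Ω → β) : ∑ b, pmass p f b = ∑ ω, p ω := by
  classical
  unfold pmass
  rw [Finset.sum_fiberwise Finset.univ f p]

/-- marginal over the first coordinate -/
lemma sum_pmass_pair (p : Ω → ℝ) (f : Ω → β) (g : Ω → γ) (y : γ) :
    ∑ x, pmass p (fun ω => (f ω, g ω)) (x, y) = pmass p g y := by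
  classical
  unfold pmass
  rw [← Finset.sum_fiberwise (Finset.univ.filter (fun ω => g ω = y)) f p]
  refine Finset.sum_congr rfl fun x _ => ?_
  congr 1
  ext ω
  simp [Prod.ext_iff, and_comm]

open Classical in
lemma pmass_comp (p : Ω → ℝ) (f : Ω → β) (k : β → δ) (d : δ) :
    pmass p (fun ω => k (f ω)) d = ∑ b ∈ Finset.univ.filter (fun b => k b = d), pmass p f b := by
  classical
  unfold pmass
  rw [← Finset.sum_fiberwise_of_maps_to (g := f)
    (t := Finset.univ.filter (fun b => k b = d)) ?_ p]
  · refine Finset.sum_congr rfl fun b hb => ?_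
    simp only [Finset.mem_filter, Finset.mem_univ, true_and] at hb
    congr 1
    ext ω
    simp only [Finset.mem_filter, Finset.mem_univ, true_and]
    constructor
    · rintro ⟨-, h2⟩; exact h2
    · intro h; exact ⟨by rw [h, hb], h⟩
  · intro ω hω
    simp only [Finset.mem_filter, Finset.mem_univ, true_and] at hω ⊢
    exact hω

open Classical in
lemma sum_pmass_comp_mul (p : Ω → ℝ) (f : Ω → β) (k : β → δ) (L : δ → ℝ) :
    ∑ d, pmass p (fun ω => k (f ω)) d * L d = ∑ b, pmass p f b * L (k b) := by
  classical
  rw [← Finset.sum_fiberwise Finset.univ k (fun b => pmass p f b * L (k b))]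
  refine Finset.sum_congr rfl fun d _ => ?_
  rw [pmass_comp p f k d, Finset.sum_mul]
  refine Finset.sum_congr rfl fun b hb => ?_
  simp only [Finset.mem_filter, Finset.mem_univ, true_and] at hb
  rw [hb]

lemma pmass_le_comp (hp : ∀ ω, 0 ≤ p ω) (f : Ω → β) (k : β → δ) (b : β) :
    pmass p f b ≤ pmass p (fun ω => k (f ω)) (k b) := by
  classical
  unfold pmass
  refine Finset.sum_le_sum_of_subset_of_nonneg ?_ fun ω _ _ => hp ω
  intro ω hω
  simp only [Finset.mem_filter, Finset.mem_univ, true_and] at hω ⊢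
  simp [hω]



/-- Conditioning on more reduces entropy: `H(X|Y) ≤ H(X|h(Y))`. -/
lemma ent_cond_le (hp : ∀ ω, 0 ≤ p ω) (hpsum : ∑ ω, p ω = 1)
    (f : Ω → β) (g : Ω → γ) (h : γ → δ) :
    ent p (fun ω => (f ω, g ω)) - ent p g ≤
      ent p (fun ω => (f ω, h (g ω))) - ent p (fun ω => h (g ω)) := by
  classical
  set Pxy : β × γ → ℝ := pmass p (fun ω => (f ω, g ω)) with hPxy
  set Py : γ → ℝ := pmass p g with hPy
  set Pxz : β × δ → ℝ := pmass p (fun ω => (f ω, h (g ω))) with hPxz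
  set Pz : δ → ℝ := pmass p (fun ω => h (g ω)) with hPz
  -- rewrite all four entropies as sums over β × γ
  have e2 : ent p g = ∑ q : β × γ, -(Pxy q * Real.log (Py q.2)) := by
    have := sum_pmass_comp_mul p (fun ω => (f ω, g ω)) Prod.snd
      (fun y => -(Real.log (Py y)))
    unfold ent
    simp only [Real.negMulLog, neg_mul, mul_neg] at this ⊢
    rw [← this]
  have e3 : ent p (fun ω => (f ω, h (g ω))) =
      ∑ q : β × γ, -(Pxy q * Real.log (Pxz (q.1, h q.2))) := by
    have := sum_pmass_comp_mul p (fun ω => (f ω, g ω)) (Prod.map id h)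
      (fun z => -(Real.log (Pxz z)))
    unfold ent
    simp only [Real.negMulLog, neg_mul, mul_neg, Prod.map, id_eq] at this ⊢
    rw [← this]
  have e4 : ent p (fun ω => h (g ω)) = ∑ q : β × γ, -(Pxy q * Real.log (Pz (h q.2))) := by
    have := sum_pmass_comp_mul p (fun ω => (f ω, g ω)) (fun q : β × γ => h q.2)
      (fun z => -(Real.log (Pz z)))
    unfold ent
    simp only [Real.negMulLog, neg_mul, mul_neg] at this ⊢
    rw [← this]
  have e1 : ent p (fun ω => (f ω, g ω)) = ∑ q : β × γ, -(Pxy q * Real.log (Pxy q)) := by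
    unfold ent
    simp [Real.negMulLog]
    rfl
  rw [e1, e2, e3, e4]
  -- termwise bound by q - p
  set Q : β × γ → ℝ := fun q => Py q.2 * Pxz (q.1, h q.2) / Pz (h q.2) with hQ
  have key : ∀ q : β × γ,
      -(Pxy q * Real.log (Pxy q)) - -(Pxy q * Real.log (Py q.2)) -
        (-(Pxy q * Real.log (Pxz (q.1, h q.2))) - -(Pxy q * Real.log (Pz (h q.2))))
      ≤ Q q - Pxy q := by
    rintro ⟨x, y⟩
    have hQnn : 0 ≤ Q (x, y) := by
      apply div_nonneg (mul_nonneg (pmass_nonneg hp _ _) (pmass_nonneg hp _ _))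
        (pmass_nonneg hp _ _)
    rcases eq_or_lt_of_le (pmass_nonneg hp (fun ω => (f ω, g ω)) (x, y)) with h0 | hpos
    · rw [show Pxy (x, y) = 0 from h0.symm]
      simpa using hQnn
    · -- positivity of everything
      have hPyp : 0 < Py y := lt_of_lt_of_le hpos
        (by simpa using pmass_le_comp hp (fun ω => (f ω, g ω)) Prod.snd (x, y))
      have hPxzp : 0 < Pxz (x, h y) := lt_of_lt_of_le hpos
        (by simpa [Prod.map] using
          pmass_le_comp hp (fun ω => (f ω, g ω)) (Prod.map id h) (x, y))
      have hPzp : 0 < Pz (h y) := lt_of_lt_of_le hPyp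
        (by simpa using pmass_le_comp hp g h y)
      have ht : 0 < Q (x, y) / Pxy (x, y) :=
        div_pos (div_pos (mul_pos hPyp hPxzp) hPzp) hpos
      have hlog : Real.log (Q (x, y) / Pxy (x, y)) ≤ Q (x, y) / Pxy (x, y) - 1 :=
        Real.log_le_sub_one_of_pos ht
      have hexp : Real.log (Q (x, y) / Pxy (x, y)) =
          Real.log (Py y) + Real.log (Pxz (x, h y)) - Real.log (Pz (h y))
            - Real.log (Pxy (x, y)) := by
        rw [hQ]
        rw [Real.log_div (by positivity) (ne_of_gt hpos),
          Real.log_div (by positivity) (ne_of_gt hPzp),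
          Real.log_mul (ne_of_gt hPyp) (ne_of_gt hPxzp)]
        try ring
      calc -(Pxy (x, y) * Real.log (Pxy (x, y))) - -(Pxy (x, y) * Real.log (Py y)) -
            (-(Pxy (x, y) * Real.log (Pxz (x, h y))) - -(Pxy (x, y) * Real.log (Pz (h y))))
          = Pxy (x, y) * Real.log (Q (x, y) / Pxy (x, y)) := by rw [hexp]; ring
        _ ≤ Pxy (x, y) * (Q (x, y) / Pxy (x, y) - 1) :=
            mul_le_mul_of_nonneg_left hlog (le_of_lt hpos)
        _ = Q (x, y) - Pxy (x, y) := by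
            have hne : Pxy (x, y) ≠ 0 := ne_of_gt hpos
            rw [mul_sub, mul_one, mul_div_assoc', mul_div_right_comm, div_self hne, one_mul]
  have hsumP : ∑ q : β × γ, Pxy q = 1 := by rw [hPxy, sum_pmass, hpsum]
  have hsumQ : ∑ q : β × γ, Q q ≤ 1 := by
    rw [← Finset.univ_product_univ, Finset.sum_product_right]
    have : ∀ y : γ, ∑ x : β, Q (x, y) = if Pz (h y) = 0 then 0 else Py y := by
      intro y
      rcases eq_or_ne (Pz (h y)) 0 with hz | hz
      · have hy0 : Py y = 0 := le_antisymm
          (by rw [← hz]; simpa using pmass_le_comp hp g h y) (pmass_nonneg hp _ _)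
        simp [hQ, hy0, hz]
      · simp only [hQ, hz, if_neg hz]
        rw [← Finset.sum_div, ← Finset.mul_sum]
        have : ∑ x : β, Pxz (x, h y) = Pz (h y) := by
          rw [hPxz, hPz]
          exact sum_pmass_pair p f (fun ω => h (g ω)) (h y)
        rw [this, mul_div_assoc, div_self hz, mul_one]
        simp
    calc ∑ y : γ, ∑ x : β, Q (x, y)
        = ∑ y : γ, (if Pz (h y) = 0 then 0 else Py y) := by
          exact Finset.sum_congr rfl fun y _ => this y
      _ ≤ ∑ y : γ, Py y := Finset.sum_le_sum fun y _ => by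
          split_ifs with hz
          · exact pmass_nonneg hp _ _
          · exact le_rfl
      _ = 1 := by rw [hPy, sum_pmass, hpsum]
  have total : ∑ q : β × γ,
      (-(Pxy q * Real.log (Pxy q)) - -(Pxy q * Real.log (Py q.2)) -
        (-(Pxy q * Real.log (Pxz (q.1, h q.2))) - -(Pxy q * Real.log (Pz (h q.2))))) ≤ 0 := by
    refine le_trans (Finset.sum_le_sum fun q _ => key q) ?_
    rw [Finset.sum_sub_distrib, hsumP]
    linarith
  have expand : ∑ q : β × γ,
      (-(Pxy q * Real.log (Pxy q)) - -(Pxy q * Real.log (Py q.2)) -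
        (-(Pxy q * Real.log (Pxz (q.1, h q.2))) - -(Pxy q * Real.log (Pz (h q.2))))) =
      (∑ q : β × γ, -(Pxy q * Real.log (Pxy q))) - (∑ q : β × γ, -(Pxy q * Real.log (Py q.2))) -
      ((∑ q : β × γ, -(Pxy q * Real.log (Pxz (q.1, h q.2)))) -
        (∑ q : β × γ, -(Pxy q * Real.log (Pz (h q.2))))) := by
    rw [Finset.sum_sub_distrib, Finset.sum_sub_distrib, Finset.sum_sub_distrib]
  linarith


/-- Entropy depends only on the induced partition. -/
lemma ent_congr (hp : ∀ ω, 0 ≤ p ω) {f : Ω → β} {g : Ω → γ}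
    (hfg : ∀ ω ω', f ω = f ω' ↔ g ω = g ω') : ent p f = ent p g := by
  classical
  rename' f => f', g => g', hfg => hfg'
  · unfold ent
    rw [← Finset.sum_subset (Finset.subset_univ (Finset.univ.image f'))
        (fun b _ hb => ?_) ,
      ← Finset.sum_subset (Finset.subset_univ (Finset.univ.image g'))
        (fun c _ hc => ?_)]
    · have exwit : ∀ b ∈ Finset.univ.image f', ∃ ω : Ω, f' ω = b := by
        intro b hb
        obtain ⟨ω, -, hω⟩ := Finset.mem_image.mp hb
        exact ⟨ω, hω⟩
      refine Finset.sum_bij (fun b hb => g' (exwit b hb).choose) ?_ ?_ ?_ ?_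
      · intro b hb
        exact Finset.mem_image_of_mem g' (Finset.mem_univ _)
      · intro b hb b' hb' hbb
        have s1 := (exwit b hb).choose_spec
        have s2 := (exwit b' hb').choose_spec
        rw [← s1, ← s2]
        exact (hfg' _ _).mpr hbb
      · intro c hc
        obtain ⟨ω, -, rfl⟩ := Finset.mem_image.mp hc
        have hb := Finset.mem_image_of_mem f' (Finset.mem_univ ω)
        refine ⟨f' ω, hb, ?_⟩
        have s1 := (exwit (f' ω) hb).choose_spec
        exact (hfg' _ _).mp s1
      · intro b hb
        have s1 := (exwit b hb).choose_spec
        congr 1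
        unfold pmass
        congr 1
        ext ω
        simp only [Finset.mem_filter, Finset.mem_univ, true_and]
        have h2 := hfg' ω (exwit b hb).choose
        rw [s1] at h2
        exact h2
    · have : pmass p g' c = 0 := by
        unfold pmass
        rw [Finset.filter_false_of_mem, Finset.sum_empty]
        intro ω _ hω
        exact hc (hω ▸ Finset.mem_image_of_mem g' (Finset.mem_univ ω))
      rw [this, Real.negMulLog_zero]
    · have : pmass p f' b = 0 := by
        unfold pmass
        rw [Finset.filter_false_of_mem, Finset.sum_empty]
        intro ω _ hω
        exact hb (hω ▸ Finset.mem_image_of_mem f' (Finset.mem_univ ω))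
      rw [this, Real.negMulLog_zero]

end EntAux


open Classical in
lemma mapEnt_eq_ent {Ω β : Type*} [Fintype Ω] [Fintype β] (p : Ω → ℝ) (f : Ω → β) :
    mapEnt p f = EntAux.ent p f / Real.log 2 := by
  unfold mapEnt EntAux.ent EntAux.pmass
  rw [Finset.sum_div]
  refine Finset.sum_congr rfl fun b _ => ?_
  rw [Real.negMulLog, Real.logb]
  ring

/-- If `U ⊄ W`, then `H_N(U|W) ≤ H_N(U | U ∩ W)`. -/
theorem stmt_4 {F Ω : Type*} [Field F] [Fintype F] [Fintype Ω]
    (p : Ω → ℝ) (hp : ∀ ω, 0 ≤ p ω) (hpsum : ∑ ω, p ω = 1)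
    (U W : Submodule F (Ω → F)) (hUW : ¬ U ≤ W) :
    condNE p U W ≤ condNE p U (U ⊓ W) := by
  classical
  set f : Ω → (↥U → F) := fun ω => (fun u : U => (u : Ω → F) ω) with hf
  set g : Ω → (↥W → F) := fun ω => (fun w : W => (w : Ω → F) ω) with hg
  set h : (↥W → F) → (↥(U ⊓ W) → F) := fun φ v => φ ⟨v.1, v.2.2⟩ with hh
  set eSup : Ω → (↥(W ⊔ U) → F) := fun ω => (fun x : ↥(W ⊔ U) => (x : Ω → F) ω) with heSup
  -- fiber equivalences
  have hfib1 : ∀ ω ω', (f ω, g ω) = (f ω', g ω') ↔ eSup ω = eSup ω' := by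
    intro ω ω'
    constructor
    · intro hpair
      have h1 : f ω = f ω' := (Prod.ext_iff.mp hpair).1
      have h2 : g ω = g ω' := (Prod.ext_iff.mp hpair).2
      funext x
      obtain ⟨w, hw, u, hu, hx⟩ := Submodule.mem_sup.mp x.2
      have hxval : (x : Ω → F) = w + u := hx.symm
      show (x : Ω → F) ω = (x : Ω → F) ω'
      rw [hxval]
      have hu' : u ω = u ω' := congrFun h1 ⟨u, hu⟩
      have hw' : w ω = w ω' := congrFun h2 ⟨w, hw⟩
      simp [Pi.add_apply, hu', hw']
    · intro hs
      rw [Prod.ext_iff]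
      constructor
      · funext u
        exact congrFun hs ⟨(u : Ω → F), le_sup_right (α := Submodule F (Ω → F)) u.2⟩
      · funext w
        exact congrFun hs ⟨(w : Ω → F), le_sup_left (α := Submodule F (Ω → F)) w.2⟩
  have hfib2 : ∀ ω ω', (f ω, h (g ω)) = (f ω', h (g ω')) ↔ f ω = f ω' := by
    intro ω ω'
    constructor
    · intro hpair
      exact (Prod.ext_iff.mp hpair).1
    · intro hfe
      rw [Prod.ext_iff]
      refine ⟨hfe, ?_⟩
      funext v
      exact congrFun hfe ⟨(v : Ω → F), v.2.1⟩
  -- entropy identities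
  have hs1 : EntAux.ent p (fun ω => (f ω, g ω)) = EntAux.ent p eSup :=
    EntAux.ent_congr hp hfib1
  have hs2 : EntAux.ent p (fun ω => (f ω, h (g ω))) = EntAux.ent p f :=
    EntAux.ent_congr hp hfib2
  have core := EntAux.ent_cond_le hp hpsum f g h
  rw [hs1, hs2] at core
  -- core : ent eSup - ent g ≤ ent f - ent (h ∘ g)
  have hlog2 : (0:ℝ) < Real.log 2 := Real.log_pos one_lt_two
  have hnum : subEnt p (W ⊔ U) - subEnt p W ≤ subEnt p U - subEnt p (U ⊓ W) := by
    have e1 : subEnt p (W ⊔ U) = EntAux.ent p eSup / Real.log 2 := mapEnt_eq_ent p eSup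
    have e2 : subEnt p W = EntAux.ent p g / Real.log 2 := mapEnt_eq_ent p g
    have e3 : subEnt p U = EntAux.ent p f / Real.log 2 := mapEnt_eq_ent p f
    have e4 : subEnt p (U ⊓ W) = EntAux.ent p (fun ω => h (g ω)) / Real.log 2 :=
      mapEnt_eq_ent p (fun ω => h (g ω))
    rw [e1, e2, e3, e4, div_sub_div_same, div_sub_div_same]
    exact div_le_div_of_nonneg_right core hlog2.le
  -- ranks
  have hltsub : U ⊓ W < U :=
    lt_of_le_of_ne inf_le_left (fun he => hUW (inf_eq_left.mp he))
  have hlt : Module.finrank F ↥(U ⊓ W) < Module.finrank F ↥U :=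
    Submodule.finrank_lt_finrank_of_lt hltsub
  have hrk := Submodule.finrank_sup_add_finrank_inf_eq W U
  rw [inf_comm W U] at hrk
  have hDr : ((Module.finrank F ↥(W ⊔ U) : ℝ) - (Module.finrank F ↥W : ℝ)) =
      ((Module.finrank F ↥U : ℝ) - (Module.finrank F ↥(U ⊓ W) : ℝ)) := by
    have h2 : (Module.finrank F ↥(W ⊔ U) : ℝ) + (Module.finrank F ↥(U ⊓ W) : ℝ) =
        (Module.finrank F ↥W : ℝ) + (Module.finrank F ↥U : ℝ) := by exact_mod_cast hrk
    linarith only [h2]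
  have hD : (0:ℝ) < (Module.finrank F ↥U : ℝ) - (Module.finrank F ↥(U ⊓ W) : ℝ) := by
    rw [sub_pos]
    exact_mod_cast hlt
  unfold condNE
  rw [sup_eq_right.mpr (inf_le_left : U ⊓ W ≤ U), hDr]
  exact div_le_div_of_nonneg_right hnum hD.le
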